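/- Let S be a measurable space and let κ₁, κ₂, ..., κ_t be Markov kernels from S to S such that each κ_s satisfies a minorization condition with a common constant δ ∈ (0,1]: there are probability measures ν_s with κ_s(x, A) ≥ δ·ν_s(A) for all x ∈ S and measurable A. Let π be any probability measure on S. Then for every probability measure μ on S, dTV(μ.bind κ₁.bind κ₂ ... .bind κ_t, π) ≤ (1 − δ)^t · dTV(μ, π) + Σ_{s=1}^{t} (1 − δ)^{t−s} · dTV(π.bind κ_s, π), where dTV(μ, ν) = sup over measurable sets A of |μ(A) − ν(A)|. -/

import Mathlib

open MeasureTheory ProbabilityTheory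

/-- The total variation distance between two measures:
`dTV(μ, ν) = sup { |μ(A) - ν(A)| : A measurable }`. -/
noncomputable def tvDist {S : Type*} [MeasurableSpace S] (μ ν : Measure S) : ℝ :=
  ⨆ A : {A : Set S // MeasurableSet A}, |(μ A).toReal - (ν A).toReal|

open scoped ENNReal

section Aux

variable {S : Type*} [MeasurableSpace S]

lemma tvDist_bddAbove (μ ν : Measure S) [IsProbabilityMeasure μ] [IsProbabilityMeasure ν] :
    BddAbove (Set.range fun A : {A : Set S // MeasurableSet A} =>
      |(μ A).toReal - (ν A).toReal|) := by
  refine ⟨1, ?_⟩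
  rintro x ⟨A, rfl⟩
  have h1 : (μ (A : Set S)).toReal ≤ 1 := by
    have := prob_le_one (μ := μ) (s := A)
    simpa using ENNReal.toReal_mono (by simp) this
  have h2 : (ν (A : Set S)).toReal ≤ 1 := by
    have := prob_le_one (μ := ν) (s := A)
    simpa using ENNReal.toReal_mono (by simp) this
  have h3 : (0:ℝ) ≤ (μ (A : Set S)).toReal := ENNReal.toReal_nonneg
  have h4 : (0:ℝ) ≤ (ν (A : Set S)).toReal := ENNReal.toReal_nonneg
  rw [abs_sub_le_iff]; constructor <;> linarith

lemma le_tvDist (μ ν : Measure S) [IsProbabilityMeasure μ] [IsProbabilityMeasure ν]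
    {A : Set S} (hA : MeasurableSet A) :
    |(μ A).toReal - (ν A).toReal| ≤ tvDist μ ν :=
  le_ciSup (tvDist_bddAbove μ ν) (⟨A, hA⟩ : {A : Set S // MeasurableSet A})

lemma tvDist_nonneg (μ ν : Measure S) [IsProbabilityMeasure μ] [IsProbabilityMeasure ν] :
    0 ≤ tvDist μ ν :=
  le_trans (abs_nonneg _) (le_tvDist μ ν MeasurableSet.empty)

lemma tvDist_triangle (μ ρ ν : Measure S) [IsProbabilityMeasure μ] [IsProbabilityMeasure ρ]
    [IsProbabilityMeasure ν] : tvDist μ ν ≤ tvDist μ ρ + tvDist ρ ν := by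
  refine ciSup_le fun A => ?_
  calc |(μ A).toReal - (ν A).toReal|
      ≤ |(μ A).toReal - (ρ A).toReal| + |(ρ A).toReal - (ν A).toReal| := abs_sub_le _ _ _
    _ ≤ tvDist μ ρ + tvDist ρ ν :=
        add_le_add (le_tvDist μ ρ A.2) (le_tvDist ρ ν A.2)

/-- Key integral comparison via Hahn decomposition. -/
lemma lintegral_sub_le_tvDist (μ ν : Measure S) [IsProbabilityMeasure μ]
    [IsProbabilityMeasure ν] {g : S → ℝ≥0∞} (hg : Measurable g) {r : ℝ} (hr : 0 ≤ r)
    (hgr : ∀ x, g x ≤ ENNReal.ofReal r) :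
    (∫⁻ x, g x ∂μ).toReal - (∫⁻ x, g x ∂ν).toReal ≤ r * tvDist μ ν := by
  obtain ⟨s, hs, h1, h2⟩ := hahn_decomposition (μ := μ) (ν := ν)
  have hres : ν.restrict s ≤ μ.restrict s := by
    refine Measure.le_iff.2 fun t ht => ?_
    rw [Measure.restrict_apply ht, Measure.restrict_apply ht]
    exact h1 _ (ht.inter hs) Set.inter_subset_right
  have hresc : μ.restrict sᶜ ≤ ν.restrict sᶜ := by
    refine Measure.le_iff.2 fun t ht => ?_
    rw [Measure.restrict_apply ht, Measure.restrict_apply ht]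
    exact h2 _ (ht.inter hs.compl) Set.inter_subset_right
  have hsub : μ.restrict s - ν.restrict s + ν.restrict s = μ.restrict s :=
    Measure.sub_add_cancel_of_le hres
  have hint1 : ∫⁻ x in s, g x ∂μ
      = ∫⁻ x, g x ∂(μ.restrict s - ν.restrict s) + ∫⁻ x in s, g x ∂ν := by
    conv_lhs => rw [← hsub]
    rw [lintegral_add_measure]
  have hρuniv : (μ.restrict s - ν.restrict s) Set.univ = μ s - ν s := by
    rw [Measure.sub_apply MeasurableSet.univ hres]
    simp [Measure.restrict_apply_univ]
  have hint2 : ∫⁻ x, g x ∂(μ.restrict s - ν.restrict s)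
      ≤ ENNReal.ofReal r * (μ s - ν s) := by
    calc ∫⁻ x, g x ∂(μ.restrict s - ν.restrict s)
        ≤ ∫⁻ _, ENNReal.ofReal r ∂(μ.restrict s - ν.restrict s) :=
          lintegral_mono fun x => hgr x
      _ = ENNReal.ofReal r * (μ s - ν s) := by rw [lintegral_const, hρuniv]
  have hint3 : ∫⁻ x in sᶜ, g x ∂μ ≤ ∫⁻ x in sᶜ, g x ∂ν := lintegral_mono' hresc le_rfl
  have htotal : ∫⁻ x, g x ∂μ ≤ ENNReal.ofReal r * (μ s - ν s) + ∫⁻ x, g x ∂ν := by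
    rw [← lintegral_add_compl g hs (μ := μ), ← lintegral_add_compl g hs (μ := ν), hint1]
    calc ∫⁻ x, g x ∂(μ.restrict s - ν.restrict s) + ∫⁻ x in s, g x ∂ν + ∫⁻ x in sᶜ, g x ∂μ
        ≤ ENNReal.ofReal r * (μ s - ν s) + ∫⁻ x in s, g x ∂ν + ∫⁻ x in sᶜ, g x ∂ν :=
          add_le_add (add_le_add hint2 le_rfl) hint3
      _ = ENNReal.ofReal r * (μ s - ν s) + (∫⁻ x in s, g x ∂ν + ∫⁻ x in sᶜ, g x ∂ν) := by ring
  have hfin : ∀ (m : Measure S) [IsProbabilityMeasure m], ∫⁻ x, g x ∂m ≠ ⊤ := by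
    intro m _
    have : ∫⁻ x, g x ∂m ≤ ENNReal.ofReal r := by
      calc ∫⁻ x, g x ∂m ≤ ∫⁻ _, ENNReal.ofReal r ∂m := lintegral_mono fun x => hgr x
        _ = ENNReal.ofReal r := by simp
    exact ne_top_of_le_ne_top ENNReal.ofReal_ne_top this
  have hRHSfin : ENNReal.ofReal r * (μ s - ν s) + ∫⁻ x, g x ∂ν ≠ ⊤ := by
    refine ENNReal.add_ne_top.2 ⟨?_, hfin ν⟩
    exact ENNReal.mul_ne_top ENNReal.ofReal_ne_top
      (ne_top_of_le_ne_top (measure_ne_top μ s) tsub_le_self)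
  have := ENNReal.toReal_mono hRHSfin htotal
  rw [ENNReal.toReal_add (ENNReal.mul_ne_top ENNReal.ofReal_ne_top
      (ne_top_of_le_ne_top (measure_ne_top μ s) tsub_le_self)) (hfin ν),
    ENNReal.toReal_mul, ENNReal.toReal_ofReal hr] at this
  have hsub' : (μ s - ν s).toReal = (μ s).toReal - (ν s).toReal :=
    ENNReal.toReal_sub_of_le (h1 s hs subset_rfl) (measure_ne_top μ s)
  have hle : (μ s).toReal - (ν s).toReal ≤ tvDist μ ν :=
    le_trans (le_abs_self _) (le_tvDist μ ν hs)
  nlinarith [this, hsub', hle]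


lemma tvDist_comm (μ ν : Measure S) : tvDist μ ν = tvDist ν μ := by
  unfold tvDist
  exact iSup_congr fun A => abs_sub_comm _ _

lemma isProbabilityMeasure_bind (μ : Measure S) [IsProbabilityMeasure μ]
    (κ : Kernel S S) [IsMarkovKernel κ] :
    IsProbabilityMeasure (μ.bind (fun x => κ x)) := by
  constructor
  rw [Measure.bind_apply MeasurableSet.univ κ.measurable.aemeasurable]
  simp

lemma tvDist_bind_contract (κ : Kernel S S) [IsMarkovKernel κ] (ν₀ : Measure S)
    [IsProbabilityMeasure ν₀] {δ : ℝ} (hδ : δ ∈ Set.Ioc (0:ℝ) 1)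
    (hmin : ∀ x A, MeasurableSet A → ENNReal.ofReal δ * ν₀ A ≤ κ x A)
    (μ ν : Measure S) [IsProbabilityMeasure μ] [IsProbabilityMeasure ν] :
    tvDist (μ.bind (fun x => κ x)) (ν.bind (fun x => κ x)) ≤ (1 - δ) * tvDist μ ν := by
  obtain ⟨hδ0, hδ1⟩ := hδ
  haveI := isProbabilityMeasure_bind μ κ
  haveI := isProbabilityMeasure_bind ν κ
  refine ciSup_le fun A' => ?_
  obtain ⟨A, hA⟩ := A'
  set c : ℝ≥0∞ := ENNReal.ofReal δ * ν₀ A with hc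
  have hcfin : c ≠ ⊤ := ENNReal.mul_ne_top ENNReal.ofReal_ne_top (measure_ne_top ν₀ A)
  set g : S → ℝ≥0∞ := fun x => κ x A with hgdef
  have hgmeas : Measurable g := κ.measurable_coe hA
  have hcg : ∀ x, c ≤ g x := fun x => hmin x A hA
  set h : S → ℝ≥0∞ := fun x => g x - c with hhdef
  have hhmeas : Measurable h := hgmeas.sub measurable_const
  have hgh : ∀ x, g x = h x + c := fun x => (tsub_add_cancel_of_le (hcg x)).symm
  have hcc' : c + ENNReal.ofReal δ * ν₀ Aᶜ = ENNReal.ofReal δ := by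
    rw [hc, ← mul_add, measure_add_measure_compl hA, measure_univ, mul_one]
  have hhle : ∀ x, h x ≤ ENNReal.ofReal (1 - δ) := by
    intro x
    have h1 : g x + κ x Aᶜ = 1 := by
      rw [hgdef, measure_add_measure_compl hA]; simp
    have h2 : h x + ENNReal.ofReal δ ≤ 1 := by
      calc h x + ENNReal.ofReal δ = h x + (c + ENNReal.ofReal δ * ν₀ Aᶜ) := by rw [hcc']
        _ = g x + ENNReal.ofReal δ * ν₀ Aᶜ := by rw [← add_assoc, ← hgh x]
        _ ≤ g x + κ x Aᶜ := add_le_add le_rfl (hmin x Aᶜ hA.compl)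
        _ = 1 := h1
    have : h x ≤ 1 - ENNReal.ofReal δ :=
      ENNReal.le_sub_of_add_le_right ENNReal.ofReal_ne_top h2
    calc h x ≤ 1 - ENNReal.ofReal δ := this
      _ = ENNReal.ofReal 1 - ENNReal.ofReal δ := by rw [ENNReal.ofReal_one]
      _ = ENNReal.ofReal (1 - δ) := (ENNReal.ofReal_sub 1 hδ0.le).symm
  have hhfin : ∀ (m : Measure S) [IsProbabilityMeasure m], ∫⁻ x, h x ∂m ≠ ⊤ := by
    intro m _
    have hle : ∫⁻ x, h x ∂m ≤ ENNReal.ofReal (1 - δ) := by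
      calc ∫⁻ x, h x ∂m ≤ ∫⁻ _, ENNReal.ofReal (1 - δ) ∂m := lintegral_mono fun x => hhle x
        _ = ENNReal.ofReal (1 - δ) := by simp
    exact ne_top_of_le_ne_top ENNReal.ofReal_ne_top hle
  have hbind : ∀ (m : Measure S) [IsProbabilityMeasure m],
      ((m.bind (fun x => κ x)) A).toReal = (∫⁻ x, h x ∂m).toReal + c.toReal := by
    intro m _
    rw [Measure.bind_apply hA κ.measurable.aemeasurable]
    have heq : ∫⁻ x, κ x A ∂m = ∫⁻ x, h x ∂m + c := by
      calc ∫⁻ x, κ x A ∂m = ∫⁻ x, (h x + c) ∂m := lintegral_congr hgh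
        _ = ∫⁻ x, h x ∂m + c := by
            rw [lintegral_add_right _ measurable_const, lintegral_const, measure_univ, mul_one]
    rw [heq, ENNReal.toReal_add (hhfin m) hcfin]
  rw [hbind μ, hbind ν]
  have h1δ : (0:ℝ) ≤ 1 - δ := by linarith
  rw [abs_sub_le_iff]
  constructor
  · have := lintegral_sub_le_tvDist μ ν hhmeas h1δ hhle
    linarith
  · have := lintegral_sub_le_tvDist ν μ hhmeas h1δ hhle
    rw [tvDist_comm] at this
    linarith

lemma tvDist_bind_step (κ : Kernel S S) [IsMarkovKernel κ] (ν₀ : Measure S)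
    [IsProbabilityMeasure ν₀] {δ : ℝ} (hδ : δ ∈ Set.Ioc (0:ℝ) 1)
    (hmin : ∀ x A, MeasurableSet A → ENNReal.ofReal δ * ν₀ A ≤ κ x A)
    (π μ : Measure S) [IsProbabilityMeasure π] [IsProbabilityMeasure μ] :
    tvDist (μ.bind (fun x => κ x)) π
      ≤ (1 - δ) * tvDist μ π + tvDist (π.bind (fun x => κ x)) π := by
  haveI := isProbabilityMeasure_bind μ κ
  haveI := isProbabilityMeasure_bind π κ
  calc tvDist (μ.bind (fun x => κ x)) π
      ≤ tvDist (μ.bind (fun x => κ x)) (π.bind (fun x => κ x))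
        + tvDist (π.bind (fun x => κ x)) π := tvDist_triangle _ _ _
    _ ≤ (1 - δ) * tvDist μ π + tvDist (π.bind (fun x => κ x)) π :=
        add_le_add (tvDist_bind_contract κ ν₀ hδ hmin μ π) le_rfl


lemma isProbabilityMeasure_foldl (l : List (Kernel S S)) (h : ∀ k ∈ l, IsMarkovKernel k)
    (μ : Measure S) [IsProbabilityMeasure μ] :
    IsProbabilityMeasure (l.foldl (fun m k => m.bind (fun x => k x)) μ) := by
  induction l generalizing μ with
  | nil => simpa using ‹IsProbabilityMeasure μ›
  | cons k l ih =>
    simp only [List.foldl_cons]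
    haveI : IsMarkovKernel k := h k List.mem_cons_self
    haveI := isProbabilityMeasure_bind μ k
    exact ih (fun k' hk' => h k' (List.mem_cons_of_mem _ hk')) _

lemma chain_aux (δ : ℝ) (hδ : δ ∈ Set.Ioc (0:ℝ) 1)
    (π : Measure S) [IsProbabilityMeasure π] :
    ∀ (t : ℕ) (κ : Fin t → Kernel S S) (_ : ∀ s, IsMarkovKernel (κ s))
      (ν : Fin t → Measure S) (_ : ∀ s, IsProbabilityMeasure (ν s))
      (_ : ∀ s : Fin t, ∀ x A, MeasurableSet A → ENNReal.ofReal δ * ν s A ≤ κ s x A)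
      (μ : Measure S) (_ : IsProbabilityMeasure μ),
      tvDist ((List.ofFn κ).foldl (fun m k => m.bind (fun x => k x)) μ) π
        ≤ (1 - δ) ^ t * tvDist μ π
          + ∑ i : Fin t, (1 - δ) ^ (t - 1 - (i : ℕ)) * tvDist (π.bind (fun x => κ i x)) π := by
  intro t
  induction t with
  | zero => intro κ _ ν _ _ μ hμ; simp
  | succ t ih =>
    intro κ hκ ν hν hmin μ hμ
    haveI := hμ
    haveI : ∀ s, IsMarkovKernel (κ s) := hκ
    haveI : ∀ s, IsProbabilityMeasure (ν s) := hν
    rw [List.ofFn_succ']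
    simp only [List.concat_eq_append, List.foldl_append, List.foldl_cons, List.foldl_nil]
    set m := (List.ofFn fun i : Fin t => κ i.castSucc).foldl
        (fun m k => m.bind (fun x => k x)) μ with hm
    haveI : IsProbabilityMeasure m := by
      refine isProbabilityMeasure_foldl _ ?_ μ
      intro k hk
      obtain ⟨i, rfl⟩ := List.mem_ofFn.1 hk
      infer_instance
    have h1δ : (0:ℝ) ≤ 1 - δ := by linarith [hδ.2]
    have hstep := tvDist_bind_step (κ (Fin.last t)) (ν (Fin.last t)) hδ
      (hmin (Fin.last t)) π m
    have hIH := ih (fun i => κ i.castSucc) (fun i => hκ _) (fun i => ν i.castSucc)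
      (fun i => hν _) (fun i => hmin _) μ hμ
    have hexp : ∀ i : Fin t, (1 - δ) * (1 - δ) ^ (t - 1 - (i : ℕ)) = (1 - δ) ^ (t - (i : ℕ)) := by
      intro i
      have hi := i.isLt
      have h' : t - (i : ℕ) = (t - 1 - (i : ℕ)) + 1 := by omega
      rw [h', pow_succ]; ring
    have hsum : (1 - δ) * ∑ i : Fin t,
        (1 - δ) ^ (t - 1 - (i : ℕ)) * tvDist (π.bind (fun x => κ i.castSucc x)) π
        = ∑ i : Fin t, (1 - δ) ^ (t - (i : ℕ)) * tvDist (π.bind (fun x => κ i.castSucc x)) π := by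
      rw [Finset.mul_sum]
      exact Finset.sum_congr rfl fun i _ => by rw [← mul_assoc, hexp i]
    calc tvDist (m.bind (fun x => κ (Fin.last t) x)) π
        ≤ (1 - δ) * tvDist m π + tvDist (π.bind (fun x => κ (Fin.last t) x)) π := hstep
      _ ≤ (1 - δ) * ((1 - δ) ^ t * tvDist μ π
            + ∑ i : Fin t, (1 - δ) ^ (t - 1 - (i : ℕ))
              * tvDist (π.bind (fun x => κ i.castSucc x)) π)
          + tvDist (π.bind (fun x => κ (Fin.last t) x)) π :=
          add_le_add (mul_le_mul_of_nonneg_left hIH h1δ) le_rfl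
      _ = (1 - δ) ^ (t + 1) * tvDist μ π
          + ∑ i : Fin (t + 1), (1 - δ) ^ (t + 1 - 1 - (i : ℕ))
            * tvDist (π.bind (fun x => κ i x)) π := by
          rw [Fin.sum_univ_castSucc]
          simp only [Fin.coe_castSucc, Fin.val_last, Nat.add_sub_cancel, Nat.sub_self,
            pow_zero, one_mul]
          rw [mul_add, hsum]
          ring

end Aux


/-- **Supporting lemma for Theorem 2 (telescoping bound for inhomogeneous chains).** Let
`κ 0, …, κ (t-1)` be Markov kernels each satisfying a Doeblin minorization with a common
constant `δ ∈ (0,1]`. Then, for any reference probability measure `π` and any initial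
probability measure `μ`, the distribution of the inhomogeneous chain after the `t` steps
satisfies
`dTV(μ κ₀ ⋯ κ_{t-1}, π) ≤ (1-δ)^t · dTV(μ, π) + Σ_{i<t} (1-δ)^{t-1-i} · dTV(π κ_i, π)`. -/
theorem inhomogeneous_chain_telescoping_bound
    {S : Type*} [MeasurableSpace S] (t : ℕ)
    (κ : Fin t → Kernel S S) [∀ s, IsMarkovKernel (κ s)]
    (ν : Fin t → Measure S) [∀ s, IsProbabilityMeasure (ν s)]
    (δ : ℝ) (hδ : δ ∈ Set.Ioc (0 : ℝ) 1)
    (hmin : ∀ s : Fin t, ∀ x : S, ∀ A : Set S, MeasurableSet A →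
      ENNReal.ofReal δ * ν s A ≤ κ s x A)
    (π : Measure S) [IsProbabilityMeasure π]
    (μ : Measure S) [IsProbabilityMeasure μ] :
    tvDist ((List.ofFn κ).foldl (fun m k => m.bind (fun x => k x)) μ) π
      ≤ (1 - δ) ^ t * tvDist μ π
        + ∑ i : Fin t, (1 - δ) ^ (t - 1 - (i : ℕ)) * tvDist (π.bind (fun x => κ i x)) π := by
  exact chain_aux δ hδ π t κ inferInstance ν inferInstance hmin μ inferInstance
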